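/- For g = sp_n(R) acting on R^{2n} by the standard representation, there is no non-zero sp_n(R)-module homomorphism from the adjoint representation sp_n(R) to Λᵏ(R^{2n}) for any k ≥ 0. -/

import Mathlib

open ExteriorAlgebra

/-- The wedge `v 0 ∧ ... ∧ v (n-1)` as an element of the `n`-th exterior power. -/
noncomputable def wedge (k : Type*) [Field k] {L : Type*} [AddCommGroup L] [Module k L]
    (n : ℕ) (v : Fin n → L) : ⋀[k]^n L :=
  ⟨ExteriorAlgebra.ιMulti k n v, ExteriorAlgebra.ιMulti_range k n (Set.mem_range_self v)⟩


namespace SpAux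

/-! ### Exterior power generalities -/

noncomputable def wAlt (k : ℕ) (M : Type*) [AddCommGroup M] [Module ℝ M] :
    M [⋀^Fin k]→ₗ[ℝ] (⋀[ℝ]^k M) :=
  (ExteriorAlgebra.ιMulti ℝ k).codRestrict _
    (fun v => ExteriorAlgebra.ιMulti_range ℝ k (Set.mem_range_self v))

lemma wedge_eq_wAlt {M : Type*} [AddCommGroup M] [Module ℝ M] (k : ℕ) (v : Fin k → M) :
    wedge ℝ k v = wAlt k M v := rfl

lemma span_wAlt {M : Type*} [AddCommGroup M] [Module ℝ M] (k : ℕ) :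
    Submodule.span ℝ (Set.range (wAlt k M)) = ⊤ := by
  apply Submodule.map_injective_of_injective (⋀[ℝ]^k M).injective_subtype
  rw [Submodule.map_span, Submodule.map_top, Submodule.range_subtype]
  have himg : (⋀[ℝ]^k M).subtype '' Set.range (wAlt k M) =
      Set.range (ExteriorAlgebra.ιMulti ℝ k (M := M)) := by
    ext x
    constructor
    · rintro ⟨y, ⟨v, rfl⟩, rfl⟩; exact ⟨v, rfl⟩
    · rintro ⟨v, rfl⟩; exact ⟨wAlt k M v, ⟨v, rfl⟩, rfl⟩
  rw [himg]
  exact ExteriorAlgebra.ιMulti_span_fixedDegree ℝ k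

noncomputable def e (I : Type*) [DecidableEq I] (p : I) : I → ℝ := Pi.single p 1

lemma span_basis_wedges {I : Type*} [Fintype I] [DecidableEq I] (k : ℕ) :
    Submodule.span ℝ (Set.range (fun r : Fin k → I => wAlt k (I → ℝ) (e I ∘ r))) = ⊤ := by
  rw [← top_le_iff, ← span_wAlt k, Submodule.span_le]
  rintro _ ⟨v, rfl⟩
  have hv : ∀ j, v j = ∑ p : I, (v j p) • e I p := by
    intro j
    ext q
    simp [e, Finset.sum_apply, Pi.single_apply, mul_comm]
  have : wAlt k (I → ℝ) v = ∑ r : Fin k → I, (∏ j, v j (r j)) • wAlt k (I → ℝ) (e I ∘ r) := by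
    calc wAlt k (I → ℝ) v = wAlt k (I → ℝ) (fun j => ∑ p : I, (v j p) • e I p) := by
          congr 1; funext j; exact hv j
      _ = ∑ r : Fin k → I, wAlt k (I → ℝ) (fun j => (v j (r j)) • e I (r j)) :=
          (wAlt k (I → ℝ)).toMultilinearMap.map_sum (fun j p => (v j p) • e I p)
      _ = ∑ r : Fin k → I, (∏ j, v j (r j)) • wAlt k (I → ℝ) (fun j => e I (r j)) := by
          refine Finset.sum_congr rfl fun r _ => ?_
          exact (wAlt k (I → ℝ)).toMultilinearMap.map_smul_univ (fun j => v j (r j))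
            (fun j => e I (r j))
  rw [this]
  refine Submodule.sum_mem _ fun r _ => Submodule.smul_mem _ _ (Submodule.subset_span ⟨r, rfl⟩)

/-! ### The action of diagonal matrices on basis wedges -/

section theta
variable {I : Type*} [Fintype I] [DecidableEq I] {k : ℕ}
variable {θ : Matrix I I ℝ → (⋀[ℝ]^k (I → ℝ) →ₗ[ℝ] ⋀[ℝ]^k (I → ℝ))}
variable (hθ : ∀ (X : Matrix I I ℝ) (v : Fin k → (I → ℝ)),
      θ X (wedge ℝ k v) = ∑ i : Fin k, wedge ℝ k (Function.update v i (X.mulVec (v i))))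

include hθ

lemma theta_diag (d : I → ℝ) (r : Fin k → I) :
    θ (Matrix.diagonal d) (wAlt k (I → ℝ) (e I ∘ r)) =
      (∑ j, d (r j)) • wAlt k (I → ℝ) (e I ∘ r) := by
  rw [← wedge_eq_wAlt, hθ]
  have step : ∀ i : Fin k,
      wedge ℝ k (Function.update (e I ∘ r) i ((Matrix.diagonal d).mulVec ((e I ∘ r) i)))
        = d (r i) • wedge ℝ k (e I ∘ r) := by
    intro i
    have h1 : (Matrix.diagonal d).mulVec ((e I ∘ r) i) = d (r i) • ((e I ∘ r) i) := by
      show (Matrix.diagonal d).mulVec (Pi.single (r i) 1) = _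
      rw [Matrix.diagonal_mulVec_single]
      ext q
      simp [e, Pi.single_apply]
    rw [h1, wedge_eq_wAlt, wedge_eq_wAlt]
    rw [(wAlt k (I → ℝ)).map_update_smul, Function.update_eq_self]
  simp_rw [step]
  rw [← Finset.sum_smul, wedge_eq_wAlt]

lemma theta_cube (d : I → ℝ)
    (hd : ∀ s : Finset I, (∑ p ∈ s, d p) * (∑ p ∈ s, d p) * (∑ p ∈ s, d p) = ∑ p ∈ s, d p)
    (w : ⋀[ℝ]^k (I → ℝ)) :
    θ (Matrix.diagonal d) (θ (Matrix.diagonal d) (θ (Matrix.diagonal d) w)) =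
      θ (Matrix.diagonal d) w := by
  have := LinearMap.ext_on_range (span_basis_wedges k (I := I))
    (f := θ (Matrix.diagonal d) ∘ₗ θ (Matrix.diagonal d) ∘ₗ θ (Matrix.diagonal d))
    (g := θ (Matrix.diagonal d)) ?_
  · exact DFunLike.congr_fun this w
  · intro r
    simp only [LinearMap.comp_apply]
    by_cases hr : Function.Injective r
    · have hl : ∑ j, d (r j) = ∑ p ∈ Finset.univ.image r, d p := by
        rw [Finset.sum_image (fun a _ b _ h => hr h)]
      rw [theta_diag hθ, map_smul, theta_diag hθ, map_smul, map_smul, theta_diag hθ,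
        smul_smul, smul_smul]
      congr 1
      rw [hl]
      linear_combination hd (Finset.univ.image r)
    · have h0 : wAlt k (I → ℝ) (e I ∘ r) = 0 := by
        apply AlternatingMap.map_eq_zero_of_not_injective
        intro hinj
        exact hr (Function.Injective.of_comp hinj)
      rw [h0]
      simp

set_option maxHeartbeats 1000000 in
set_option synthInstance.maxHeartbeats 400000 in
lemma eig_kill (d : I → ℝ)
    (hd : ∀ s : Finset I, (∑ p ∈ s, d p) * (∑ p ∈ s, d p) * (∑ p ∈ s, d p) = ∑ p ∈ s, d p)
    (c : ℝ) (hc : c * c * c ≠ c) (w : ⋀[ℝ]^k (I → ℝ))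
    (hw : θ (Matrix.diagonal d) w = c • w) : w = 0 := by
  have h3 : (c * c * c) • w = c • w := by
    calc (c * c * c) • w
        = θ (Matrix.diagonal d) (θ (Matrix.diagonal d) (θ (Matrix.diagonal d) w)) := by
          rw [hw, map_smul, hw, map_smul, map_smul, hw, smul_smul, smul_smul]
      _ = θ (Matrix.diagonal d) w := theta_cube hθ d hd w
      _ = c • w := hw
  have h4 : (c * c * c - c) • w = 0 := by
    have e1 : (c * c * c - c) • w = (c * c * c) • w - c • w := sub_smul (c * c * c) c w
    rw [e1, h3, sub_self]
  have e2 : (c * c * c - c)⁻¹ • ((c * c * c - c) • w) = w :=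
    inv_smul_smul₀ (sub_ne_zero.mpr hc) w
  rw [h4, smul_zero] at e2
  exact e2.symm

end theta
/-! ### Matrix computations in sp -/

variable {n : ℕ}

open Matrix

abbrev E (i j : Fin n) : Matrix (Fin n) (Fin n) ℝ := single i j 1

lemma E_transpose (i j : Fin n) : (E i j)ᵀ = E j i := by
  ext a b; simp [single, and_comm]

abbrev sp (n : ℕ) := LieAlgebra.Symplectic.sp (Fin n) ℝ

lemma mem_sp (A B C : Matrix (Fin n) (Fin n) ℝ) (hB : Bᵀ = B) (hC : Cᵀ = C) :
    Matrix.fromBlocks A B C (-Aᵀ) ∈ sp n := by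
  rw [sp, LieAlgebra.Symplectic.sp, mem_skewAdjointMatricesLieSubalgebra,
    mem_skewAdjointMatricesSubmodule]
  show _ = _
  simp [Matrix.J, Matrix.fromBlocks_transpose,
    Matrix.fromBlocks_multiply, hB, hC, Matrix.fromBlocks_neg]

-- the distinguished elements
noncomputable def Hm (i : Fin n) : Matrix (Fin n ⊕ Fin n) (Fin n ⊕ Fin n) ℝ :=
  fromBlocks (E i i) 0 0 (-(E i i))
noncomputable def Pm (i : Fin n) : Matrix (Fin n ⊕ Fin n) (Fin n ⊕ Fin n) ℝ :=
  fromBlocks 0 (E i i) 0 0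
noncomputable def Qm (i : Fin n) : Matrix (Fin n ⊕ Fin n) (Fin n ⊕ Fin n) ℝ :=
  fromBlocks 0 0 (E i i) 0
noncomputable def Zm (i j : Fin n) : Matrix (Fin n ⊕ Fin n) (Fin n ⊕ Fin n) ℝ :=
  fromBlocks (E i j) 0 0 (-(E j i))
noncomputable def Bm (i j : Fin n) : Matrix (Fin n ⊕ Fin n) (Fin n ⊕ Fin n) ℝ :=
  fromBlocks 0 (E i j + E j i) 0 0
noncomputable def Cm (i j : Fin n) : Matrix (Fin n ⊕ Fin n) (Fin n ⊕ Fin n) ℝ :=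
  fromBlocks 0 0 (E i j + E j i) 0

lemma Hm_mem (i : Fin n) : Hm i ∈ sp n := by
  have := mem_sp (E i i) 0 0 (by simp) (by simp)
  simpa [Hm, E_transpose] using this
lemma Pm_mem (i : Fin n) : Pm i ∈ sp n := by
  have := mem_sp 0 (E i i) 0 (by simp [E_transpose]) (by simp)
  simpa [Pm] using this
lemma Qm_mem (i : Fin n) : Qm i ∈ sp n := by
  have := mem_sp 0 0 (E i i) (by simp) (by simp [E_transpose])
  simpa [Qm] using this
lemma Zm_mem (i j : Fin n) : Zm i j ∈ sp n := by
  have := mem_sp (E i j) 0 0 (by simp) (by simp)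
  simpa [Zm, E_transpose] using this
lemma Bm_mem (i j : Fin n) : Bm i j ∈ sp n := by
  have := mem_sp 0 (E i j + E j i) 0 (by simp [Matrix.transpose_add, E_transpose, add_comm]) (by simp)
  simpa [Bm] using this
lemma Cm_mem (i j : Fin n) : Cm i j ∈ sp n := by
  have := mem_sp 0 0 (E i j + E j i) (by simp) (by simp [Matrix.transpose_add, E_transpose, add_comm])
  simpa [Cm] using this

lemma EE (i j a b : Fin n) : E i j * E a b = if j = a then E i b else 0 := by
  rcases eq_or_ne j a with rfl | h
  · simp [single_mul_single_same]
  · simp [h, single_mul_single_of_ne]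

lemma Etwo (i j : Fin n) : single i j (2:ℝ) = E i j + E i j := by
  rw [show (2:ℝ) = 1 + 1 by norm_num, single_add]

lemma bracket_Hm_Pm (i : Fin n) : Hm i * Pm i - Pm i * Hm i = (2 : ℝ) • Pm i := by
  simp [Hm, Pm, fromBlocks_multiply, EE, fromBlocks_smul, sub_eq_add_neg, fromBlocks_neg,
    fromBlocks_add, fromBlocks_inj, Matrix.mul_neg, Matrix.neg_mul, Etwo]

lemma bracket_Hm_Qm (i : Fin n) : Hm i * Qm i - Qm i * Hm i = (-2 : ℝ) • Qm i := by
  simp [Hm, Qm, fromBlocks_multiply, EE, fromBlocks_smul, sub_eq_add_neg, fromBlocks_neg,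
    fromBlocks_add, fromBlocks_inj, Matrix.mul_neg, Matrix.neg_mul, Etwo, neg_add]

lemma bracket_Pm_Qm (i : Fin n) : Pm i * Qm i - Qm i * Pm i = Hm i := by
  simp [Hm, Pm, Qm, fromBlocks_multiply, EE, sub_eq_add_neg, fromBlocks_neg,
    fromBlocks_add, fromBlocks_inj, Matrix.mul_neg, Matrix.neg_mul]

lemma bracket_Cm_Pm (i j : Fin n) (h : i ≠ j) : Cm i j * Pm i - Pm i * Cm i j = - Zm i j := by
  simp [Cm, Pm, Zm, fromBlocks_multiply, EE, sub_eq_add_neg, fromBlocks_neg,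
    fromBlocks_add, fromBlocks_inj, Matrix.mul_neg, Matrix.neg_mul, Matrix.add_mul,
    Matrix.mul_add, h, h.symm]

lemma bracket_Pm_Zm (i j : Fin n) : Pm i * Zm j i - Zm j i * Pm i = - Bm i j := by
  simp [Bm, Pm, Zm, fromBlocks_multiply, EE, sub_eq_add_neg, fromBlocks_neg,
    fromBlocks_add, fromBlocks_inj, Matrix.mul_neg, Matrix.neg_mul, add_comm]

lemma bracket_Qm_Zm (i j : Fin n) : Qm i * Zm i j - Zm i j * Qm i = Cm i j := by
  simp [Cm, Qm, Zm, fromBlocks_multiply, EE, sub_eq_add_neg, fromBlocks_neg,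
    fromBlocks_add, fromBlocks_inj, Matrix.mul_neg, Matrix.neg_mul]

section decomp
variable {M : Matrix (Fin n ⊕ Fin n) (Fin n ⊕ Fin n) ℝ}

lemma sp_eqn (hM : M ∈ sp n) : Mᵀ * Matrix.J (Fin n) ℝ = Matrix.J (Fin n) ℝ * (-M) := by
  rw [sp, LieAlgebra.Symplectic.sp, mem_skewAdjointMatricesLieSubalgebra,
    mem_skewAdjointMatricesSubmodule] at hM
  exact hM

lemma sp_entry_B (hM : M ∈ sp n) (a b : Fin n) :
    M (Sum.inl a) (Sum.inr b) = M (Sum.inl b) (Sum.inr a) := by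
  have h := congrFun (congrFun (sp_eqn hM) (Sum.inr a)) (Sum.inr b)
  simp only [Matrix.mul_apply, Matrix.J, Matrix.fromBlocks, Fintype.sum_sum_type] at h
  simp [Matrix.one_apply, Finset.sum_ite_eq, Finset.sum_ite_eq',
    Matrix.transpose_apply, mul_ite, ite_mul, Matrix.neg_apply] at h
  linarith

lemma sp_entry_C (hM : M ∈ sp n) (a b : Fin n) :
    M (Sum.inr a) (Sum.inl b) = M (Sum.inr b) (Sum.inl a) := by
  have h := congrFun (congrFun (sp_eqn hM) (Sum.inl a)) (Sum.inl b)
  simp only [Matrix.mul_apply, Matrix.J, Matrix.fromBlocks, Fintype.sum_sum_type] at h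
  simp [Matrix.one_apply, Finset.sum_ite_eq, Finset.sum_ite_eq',
    Matrix.transpose_apply, mul_ite, ite_mul, Matrix.neg_apply] at h
  linarith

lemma sp_entry_D (hM : M ∈ sp n) (a b : Fin n) :
    M (Sum.inr a) (Sum.inr b) = - M (Sum.inl b) (Sum.inl a) := by
  have h := congrFun (congrFun (sp_eqn hM) (Sum.inl a)) (Sum.inr b)
  simp only [Matrix.mul_apply, Matrix.J, Matrix.fromBlocks, Fintype.sum_sum_type] at h
  simp [Matrix.one_apply, Finset.sum_ite_eq, Finset.sum_ite_eq',
    Matrix.transpose_apply, mul_ite, ite_mul, Matrix.neg_apply] at h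
  linarith

lemma sp_decomp (hM : M ∈ sp n) :
    M = (∑ i, ∑ j, M (Sum.inl i) (Sum.inl j) • Zm i j)
      + (∑ i, ∑ j, (M (Sum.inl i) (Sum.inr j) / 2) • Bm i j)
      + (∑ i, ∑ j, (M (Sum.inr i) (Sum.inl j) / 2) • Cm i j) := by
  have hB := sp_entry_B hM
  have hC := sp_entry_C hM
  have hD := sp_entry_D hM
  ext p q
  rcases p with a | a <;> rcases q with b | b <;>
    simp [Matrix.sum_apply, Zm, Bm, Cm, Matrix.fromBlocks, single,
      ite_and, mul_ite, ite_mul, mul_zero, zero_mul, mul_one, one_mul, mul_add, add_mul,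
      Finset.sum_ite_irrel, Finset.sum_const_zero,
      Finset.sum_add_distrib, Finset.sum_ite_eq, Finset.sum_ite_eq', Finset.mul_sum] <;>
    linarith [hB a b, hC a b, hD a b, hB b a, hC b a, hD b a]

end decomp

end SpAux

namespace SpAux
variable {n : ℕ}

noncomputable def dvec (i : Fin n) : (Fin n ⊕ Fin n) → ℝ :=
  fun p => (if p = Sum.inl i then 1 else 0) - (if p = Sum.inr i then 1 else 0)

lemma Hm_eq_diagonal (i : Fin n) : Hm i = Matrix.diagonal (dvec i) := by
  ext p q
  by_cases hpq : p = q
  · subst hpq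
    rcases p with a | a <;>
      simp [Hm, dvec, Matrix.fromBlocks, Matrix.diagonal, Matrix.single, eq_comm]
  · rw [Matrix.diagonal_apply_ne _ hpq]
    rcases p with a | a <;> rcases q with b | b <;>
      simp [Hm, dvec, Matrix.fromBlocks, Matrix.single] <;>
      try (rintro rfl rfl; exact hpq rfl)

lemma dvec_sum (i : Fin n) (s : Finset (Fin n ⊕ Fin n)) :
    (∑ p ∈ s, dvec i p) * (∑ p ∈ s, dvec i p) * (∑ p ∈ s, dvec i p) = ∑ p ∈ s, dvec i p := by
  have h : ∑ p ∈ s, dvec i p =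
      (if Sum.inl i ∈ s then (1:ℝ) else 0) - (if Sum.inr i ∈ s then (1:ℝ) else 0) := by
    simp [dvec, Finset.sum_sub_distrib, Finset.sum_ite_eq', Finset.sum_ite_eq]
  rw [h]
  split_ifs <;> norm_num

end SpAux

attribute [local instance] LieRing.ofAssociativeRing

open SpAux in
/-- for `g = sp_n(ℝ)` acting on `ℝ^{2n}` by the standard representation
(extended to `Λᵏ(ℝ^{2n})` by derivations `θ`), there is no non-zero `sp_n(ℝ)`-module
homomorphism from the adjoint representation `sp_n(ℝ)` to `Λᵏ(ℝ^{2n})` for any `k`. -/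
theorem sp_n_no_adjoint_summand
    (n k : ℕ)
    (θ : Matrix (Fin n ⊕ Fin n) (Fin n ⊕ Fin n) ℝ →
      (⋀[ℝ]^k ((Fin n ⊕ Fin n) → ℝ) →ₗ[ℝ] ⋀[ℝ]^k ((Fin n ⊕ Fin n) → ℝ)))
    (hθ : ∀ (X : Matrix (Fin n ⊕ Fin n) (Fin n ⊕ Fin n) ℝ)
      (v : Fin k → ((Fin n ⊕ Fin n) → ℝ)),
      θ X (wedge ℝ k v) =
        ∑ i : Fin k, wedge ℝ k (Function.update v i (X.mulVec (v i)))) :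
    ∀ φ : ↥(LieAlgebra.Symplectic.sp (Fin n) ℝ) →ₗ[ℝ] ⋀[ℝ]^k ((Fin n ⊕ Fin n) → ℝ),
      (∀ X Y : ↥(LieAlgebra.Symplectic.sp (Fin n) ℝ),
        φ ⁅X, Y⁆ = θ (X : Matrix (Fin n ⊕ Fin n) (Fin n ⊕ Fin n) ℝ) (φ Y)) →
      φ = 0 := by
  intro φ hφ
  have hkill : ∀ (i : Fin n) (c : ℝ), c * c * c ≠ c →
      ∀ w, θ (Hm i) w = c • w → w = 0 := by
    intro i c hc w hw
    refine eig_kill hθ (dvec i) (dvec_sum i) c hc w ?_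
    rw [← Hm_eq_diagonal]
    exact hw
  have hP : ∀ i : Fin n, φ ⟨Pm i, Pm_mem i⟩ = 0 := by
    intro i
    have hb : ⁅(⟨Hm i, Hm_mem i⟩ : ↥(sp n)), (⟨Pm i, Pm_mem i⟩ : ↥(sp n))⁆
        = (2:ℝ) • (⟨Pm i, Pm_mem i⟩ : ↥(sp n)) := by
      apply Subtype.ext
      rw [LieSubalgebra.coe_bracket, Ring.lie_def]
      exact bracket_Hm_Pm i
    have h2 : θ (Hm i) (φ ⟨Pm i, Pm_mem i⟩) = (2:ℝ) • φ ⟨Pm i, Pm_mem i⟩ := by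
      rw [← hφ ⟨Hm i, Hm_mem i⟩ ⟨Pm i, Pm_mem i⟩, hb, map_smul]
    exact hkill i 2 (by norm_num) _ h2
  have hQ : ∀ i : Fin n, φ ⟨Qm i, Qm_mem i⟩ = 0 := by
    intro i
    have hb : ⁅(⟨Hm i, Hm_mem i⟩ : ↥(sp n)), (⟨Qm i, Qm_mem i⟩ : ↥(sp n))⁆
        = (-2:ℝ) • (⟨Qm i, Qm_mem i⟩ : ↥(sp n)) := by
      apply Subtype.ext
      rw [LieSubalgebra.coe_bracket, Ring.lie_def]
      exact bracket_Hm_Qm i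
    have h2 : θ (Hm i) (φ ⟨Qm i, Qm_mem i⟩) = (-2:ℝ) • φ ⟨Qm i, Qm_mem i⟩ := by
      rw [← hφ ⟨Hm i, Hm_mem i⟩ ⟨Qm i, Qm_mem i⟩, hb, map_smul]
    exact hkill i (-2) (by norm_num) _ h2
  have hZ : ∀ i j : Fin n, φ ⟨Zm i j, Zm_mem i j⟩ = 0 := by
    intro i j
    rcases eq_or_ne i j with rfl | hij
    · have hb : ⁅(⟨Pm i, Pm_mem i⟩ : ↥(sp n)), (⟨Qm i, Qm_mem i⟩ : ↥(sp n))⁆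
          = (⟨Zm i i, Zm_mem i i⟩ : ↥(sp n)) := by
        apply Subtype.ext
        rw [LieSubalgebra.coe_bracket, Ring.lie_def]
        exact bracket_Pm_Qm i
      rw [← hb, hφ, hQ, map_zero]
    · have hb : ⁅(⟨Cm i j, Cm_mem i j⟩ : ↥(sp n)), (⟨Pm i, Pm_mem i⟩ : ↥(sp n))⁆
          = -(⟨Zm i j, Zm_mem i j⟩ : ↥(sp n)) := by
        apply Subtype.ext
        rw [LieSubalgebra.coe_bracket, Ring.lie_def]
        exact bracket_Cm_Pm i j hij
      have := hφ ⟨Cm i j, Cm_mem i j⟩ ⟨Pm i, Pm_mem i⟩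
      rw [hb, map_neg, hP, map_zero, neg_eq_zero] at this
      exact this
  have hB : ∀ i j : Fin n, φ ⟨Bm i j, Bm_mem i j⟩ = 0 := by
    intro i j
    have hb : ⁅(⟨Pm i, Pm_mem i⟩ : ↥(sp n)), (⟨Zm j i, Zm_mem j i⟩ : ↥(sp n))⁆
        = -(⟨Bm i j, Bm_mem i j⟩ : ↥(sp n)) := by
      apply Subtype.ext
      rw [LieSubalgebra.coe_bracket, Ring.lie_def]
      exact bracket_Pm_Zm i j
    have := hφ ⟨Pm i, Pm_mem i⟩ ⟨Zm j i, Zm_mem j i⟩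
    rw [hb, map_neg, hZ, map_zero, neg_eq_zero] at this
    exact this
  have hC : ∀ i j : Fin n, φ ⟨Cm i j, Cm_mem i j⟩ = 0 := by
    intro i j
    have hb : ⁅(⟨Qm i, Qm_mem i⟩ : ↥(sp n)), (⟨Zm i j, Zm_mem i j⟩ : ↥(sp n))⁆
        = (⟨Cm i j, Cm_mem i j⟩ : ↥(sp n)) := by
      apply Subtype.ext
      rw [LieSubalgebra.coe_bracket, Ring.lie_def]
      exact bracket_Qm_Zm i j
    rw [← hb, hφ, hZ, map_zero]
  ext X
  have hXeq : X = (∑ i, ∑ j, X.val (Sum.inl i) (Sum.inl j) • (⟨Zm i j, Zm_mem i j⟩ : ↥(sp n)))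
      + (∑ i, ∑ j, (X.val (Sum.inl i) (Sum.inr j) / 2) • (⟨Bm i j, Bm_mem i j⟩ : ↥(sp n)))
      + (∑ i, ∑ j, (X.val (Sum.inr i) (Sum.inl j) / 2) • (⟨Cm i j, Cm_mem i j⟩ : ↥(sp n))) := by
    apply Subtype.ext
    push_cast [AddSubmonoidClass.coe_finset_sum]
    exact sp_decomp X.prop
  rw [hXeq]
  simp only [map_add, map_sum, map_smul, hZ, hB, hC, smul_zero, Finset.sum_const_zero,
    add_zero, LinearMap.zero_apply]
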